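/- arXiv:1406.3219 — 5 statements merged into one kernel-verified Lean document; each statement's English description precedes it below -/
import Mathlib

section
/- Let ℰ be a locally cartesian closed category with a terminal object (hence cartesian closed), and let p : A₁ → A₀ and q : B₁ → B₀ be morphisms of ℰ. Let G = [A₀, B₀] ×_{[A₁, B₀]} [A₁, B₁] be the pullback of the maps [p, B₀] : [A₀, B₀] → [A₁, B₀] and [A₁, q] : [A₁, B₁] → [A₁, B₀], and define e₁ : G × A₁ → B₁ and e₀ : G × A₀ → B₀ as the evaluations composed with the respective pullback projections. Then e₀ ∘ (G × p) = q ∘ e₁, and (G, e₀, e₁) is universal: for every object X and maps f₁ : X × A₁ → B₁, f₀ : X × A₀ → B₀ with f₀ ∘ (X × p) = q ∘ f₁, there is a unique map f : X → G such that f₁ = e₁ ∘ (f × A₁) and f₀ = e₀ ∘ (f × A₀). -/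
open CategoryTheory Category Limits Opposite MonoidalCategory

universe v u

noncomputable section

namespace NatModel

variable {C : Type u} [SmallCategory C]


attribute [local instance] BraidedCategory.ofCartesianMonoidalCategory

/-- In a locally cartesian closed category with a terminal object (hence
cartesian closed), for `p : A₁ ⟶ A₀` and `q : B₁ ⟶ B₀`, the object
`G = [A₀, B₀] ×_{[A₁, B₀]} [A₁, B₁]` together with the evaluations `e₁ : G × A₁ ⟶ B₁` and
`e₀ : G × A₀ ⟶ B₀` satisfies `e₀ ∘ (G × p) = q ∘ e₁` and is the universal commutative square
from `- × p` to `q`. -/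
theorem generic_filler_object {E : Type u} [Category.{v} E] [HasFiniteLimits E]
    [CartesianMonoidalCategory E] [MonoidalClosed E]
    (lcc : ∀ Z : E, @MonoidalClosed (Over Z) _
      (CartesianMonoidalCategory.ofHasFiniteProducts (C := Over Z)).toMonoidalCategory)
    {A₀ A₁ B₀ B₁ : E} (p : A₁ ⟶ A₀) (q : B₁ ⟶ B₀) :
    let G := pullback ((MonoidalClosed.pre p).app B₀) ((ihom A₁).map q)
    let e₁ : G ⊗ A₁ ⟶ B₁ :=
      (@BraidedCategory.braiding E _ _ BraidedCategory.ofCartesianMonoidalCategory G A₁).hom ≫ (A₁ ◁ pullback.snd ((MonoidalClosed.pre p).app B₀) ((ihom A₁).map q)) ≫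
        (ihom.ev A₁).app B₁
    let e₀ : G ⊗ A₀ ⟶ B₀ :=
      (@BraidedCategory.braiding E _ _ BraidedCategory.ofCartesianMonoidalCategory G A₀).hom ≫ (A₀ ◁ pullback.fst ((MonoidalClosed.pre p).app B₀) ((ihom A₁).map q)) ≫
        (ihom.ev A₀).app B₀
    (G ◁ p) ≫ e₀ = e₁ ≫ q ∧
    ∀ (W : E) (f₁ : W ⊗ A₁ ⟶ B₁) (f₀ : W ⊗ A₀ ⟶ B₀), (W ◁ p) ≫ f₀ = f₁ ≫ q →
      ∃! h : W ⟶ G, f₁ = (h ▷ A₁) ≫ e₁ ∧ f₀ = (h ▷ A₀) ≫ e₀ := by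
  intro G e₁ e₀
  have key₁ : ∀ (W : E) (h : W ⟶ G), (h ▷ A₁) ≫ e₁ =
      (β_ W A₁).hom ≫ MonoidalClosed.uncurry
        (h ≫ pullback.snd ((MonoidalClosed.pre p).app B₀) ((ihom A₁).map q)) := by
    intro W h
    simp only [e₁, MonoidalClosed.uncurry_eq, MonoidalCategory.whiskerLeft_comp,
      ← Category.assoc]
    congr 2
    exact BraidedCategory.braiding_naturality_left h _
  have key₀ : ∀ (W : E) (h : W ⟶ G), (h ▷ A₀) ≫ e₀ =
      (β_ W A₀).hom ≫ MonoidalClosed.uncurry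
        (h ≫ pullback.fst ((MonoidalClosed.pre p).app B₀) ((ihom A₁).map q)) := by
    intro W h
    simp only [e₀, MonoidalClosed.uncurry_eq, MonoidalCategory.whiskerLeft_comp,
      ← Category.assoc]
    congr 2
    exact BraidedCategory.braiding_naturality_left h _
  constructor
  · -- square commutes
    simp only [e₀, e₁]
    rw [BraidedCategory.braiding_naturality_right_assoc, ← whisker_exchange_assoc,
      ← MonoidalClosed.id_tensor_pre_app_comp_ev]
    have hnat : (A₁ ◁ (ihom A₁).map q) ≫ (ihom.ev A₁).app B₀ = (ihom.ev A₁).app B₁ ≫ q :=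
      (ihom.ev A₁).naturality q
    simp only [Category.assoc, ← hnat, ← MonoidalCategory.whiskerLeft_comp_assoc,
      pullback.condition]
  · intro W f₁ f₀ hf
    set c₀ : W ⟶ (ihom A₀).obj B₀ := MonoidalClosed.curry ((β_ W A₀).inv ≫ f₀) with hc₀
    set c₁ : W ⟶ (ihom A₁).obj B₁ := MonoidalClosed.curry ((β_ W A₁).inv ≫ f₁) with hc₁
    have w : c₀ ≫ (MonoidalClosed.pre p).app B₀ = c₁ ≫ (ihom A₁).map q := by
      apply MonoidalClosed.uncurry_injective
      rw [MonoidalClosed.uncurry_natural_right, hc₁, MonoidalClosed.uncurry_curry]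
      rw [MonoidalClosed.uncurry_eq, MonoidalCategory.whiskerLeft_comp, Category.assoc,
        MonoidalClosed.id_tensor_pre_app_comp_ev, whisker_exchange_assoc]
      rw [show (A₀ ◁ c₀) ≫ (ihom.ev A₀).app B₀ = MonoidalClosed.uncurry c₀ from
        (MonoidalClosed.uncurry_eq c₀).symm]
      rw [hc₀, MonoidalClosed.uncurry_curry,
        BraidedCategory.braiding_inv_naturality_left_assoc, hf, Category.assoc]
    refine ⟨pullback.lift c₀ c₁ w, ⟨?_, ?_⟩, ?_⟩
    · rw [key₁, pullback.lift_snd, hc₁, MonoidalClosed.uncurry_curry, Iso.hom_inv_id_assoc]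
    · rw [key₀, pullback.lift_fst, hc₀, MonoidalClosed.uncurry_curry, Iso.hom_inv_id_assoc]
    · rintro h ⟨h1, h0⟩
      apply pullback.hom_ext
      · rw [pullback.lift_fst, hc₀]
        rw [key₀] at h0
        rw [h0, Iso.inv_hom_id_assoc, MonoidalClosed.curry_uncurry]
      · rw [pullback.lift_snd, hc₁]
        rw [key₁] at h1
        rw [h1, Iso.inv_hom_id_assoc, MonoidalClosed.curry_uncurry]

end NatModel

end
end

section
/- Let p : Ũ ⟶ U be a representable natural transformation of presheaves on a small category ℂ, and let P_p be its polynomial endofunctor on the category of presheaves. Then for every object Γ of ℂ there is a bijection, natural in Γ, between maps yΓ ⟶ P_p(U) and pairs of maps (A : yΓ ⟶ U, B : yΓ ×_U Ũ ⟶ U), where yΓ ×_U Ũ denotes the pullback of p along A. -/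
open CategoryTheory Category Limits Opposite MonoidalCategory

universe v u

noncomputable section

namespace NatModel

variable {C : Type u} [SmallCategory C]


/-- A natural transformation of presheaves on a small category `C` is **representable** if,
for every `c : C` and every `x : yC ⟶ X`, there are `d : C`, `p : d ⟶ c` and `η : yd ⟶ Y`
making the square with top `η`, left `y p`, right `f` and bottom `x` a pullback. -/
def RepNT {Y X : Cᵒᵖ ⥤ Type u} (f : Y ⟶ X) : Prop :=
  ∀ (c : C) (x : yoneda.obj c ⟶ X), ∃ (d : C) (p : d ⟶ c) (η : yoneda.obj d ⟶ Y),
    IsPullback η (yoneda.map p) f x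


section Poly

variable {U' U : Cᵒᵖ ⥤ Type u}

/-- The polynomial endofunctor `P_p = Σ_U ∘ Π_p ∘ Ũ*` of `p : Ũ ⟶ U`, where
`F` is a right adjoint to pullback along `p` (i.e. `F = Π_p`), `Over.star Ũ` is base change
`Ũ* = (Ũ ⨯ -)` and `Over.forget U = Σ_U`. -/
def polyFunctor (p : U' ⟶ U) (F : Over U' ⥤ Over U) : (Cᵒᵖ ⥤ Type u) ⥤ (Cᵒᵖ ⥤ Type u) :=
  Over.star U' ⋙ F ⋙ Over.forget U

/-- The first component (canonical projection `P_p(X) ⟶ U`) of the pair of maps classifying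
the identity of `P_p(X)`. -/
def polyProj (p : U' ⟶ U) (F : Over U' ⥤ Over U) (X : Cᵒᵖ ⥤ Type u) :
    (polyFunctor p F).obj X ⟶ U :=
  (F.obj ((Over.star U').obj X)).hom

/-- The second component (evaluation `P_p(X) ×_U Ũ ⟶ X`) of the pair of maps classifying
the identity of `P_p(X)`; it is obtained from the counit of `Over.pullback p ⊣ F = Π_p`. -/
def polyEv (p : U' ⟶ U) (F : Over U' ⥤ Over U) (adj : Over.pullback p ⊣ F)
    (X : Cᵒᵖ ⥤ Type u) : pullback (polyProj p F X) p ⟶ X :=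
  (adj.counit.app ((Over.star U').obj X)).left ≫ (Over.forgetAdjStar U').counit.app X

/-- The map `π̃ : Q ⟶ P_p(U)`, the composite of the pullback projection
`Q = (P_p(U) ×_U Ũ) ×_U Ũ ⟶ P_p(U) ×_U Ũ` with the projection to `P_p(U)`. -/
def polyTilde (p : U' ⟶ U) (F : Over U' ⥤ Over U) (adj : Over.pullback p ⊣ F) :
    pullback (polyEv p F adj U) p ⟶ (polyFunctor p F).obj U :=
  pullback.fst (polyEv p F adj U) p ≫ pullback.fst (polyProj p F U) p

end Poly



section ClassEquiv

variable {U' U : Cᵒᵖ ⥤ Type u}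

private lemma sigma_mk_eq {E : Type*} [Category E] {V : E} {X : Over V} {Γ : E}
    (l : Γ ⟶ X.left) (A : Γ ⟶ V) (h : l ≫ X.hom = A) :
    ∀ (w : Over.mk A ⟶ X), w.left = l →
      (⟨l ≫ X.hom, Over.homMk l rfl⟩ : Σ A : Γ ⟶ V, (Over.mk A ⟶ X)) = ⟨A, w⟩ := by
  subst h
  intro w hw
  exact congrArg (Sigma.mk _) (Over.OverMorphism.ext hw.symm)

/-- Maps `Γ ⟶ X.left` correspond to pairs `(A : Γ ⟶ V, Over.mk A ⟶ X)`. -/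
def overHomEquiv {E : Type*} [Category E] {V : E} (X : Over V) (Γ : E) :
    (Γ ⟶ X.left) ≃ Σ A : Γ ⟶ V, (Over.mk A ⟶ X) where
  toFun g := ⟨g ≫ X.hom, Over.homMk g rfl⟩
  invFun x := x.2.left
  left_inv _ := rfl
  right_inv x := sigma_mk_eq x.2.left x.1 (Over.w x.2) x.2 rfl

/-- The classifying equivalence for the polynomial endofunctor. -/
def classEquiv (p : U' ⟶ U) (F : Over U' ⥤ Over U) (adj : Over.pullback p ⊣ F) (Γ : C) :
    (yoneda.obj Γ ⟶ (polyFunctor p F).obj U) ≃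
      (Σ A : yoneda.obj Γ ⟶ U, (pullback A p ⟶ U)) :=
  (overHomEquiv (F.obj ((Over.star U').obj U)) (yoneda.obj Γ)).trans
    (Equiv.sigmaCongrRight fun A =>
      ((adj.homEquiv (Over.mk A) ((Over.star U').obj U)).symm.trans
        ((Over.forgetAdjStar U').homEquiv ((Over.pullback p).obj (Over.mk A)) U).symm))

lemma classEquiv_fst (p : U' ⟶ U) (F : Over U' ⥤ Over U) (adj : Over.pullback p ⊣ F) (Γ : C)
    (g : yoneda.obj Γ ⟶ (polyFunctor p F).obj U) :
    ((classEquiv p F adj Γ) g).1 = g ≫ polyProj p F U := rfl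

lemma classEquiv_snd (p : U' ⟶ U) (F : Over U' ⥤ Over U) (adj : Over.pullback p ⊣ F) (Γ : C)
    (g : yoneda.obj Γ ⟶ (polyFunctor p F).obj U) :
    ((classEquiv p F adj Γ) g).2 =
      ((adj.homEquiv (Over.mk (g ≫ polyProj p F U)) ((Over.star U').obj U)).symm
          (Over.homMk g rfl)).left ≫
        (Over.forgetAdjStar U').counit.app U := by
  show ((Over.forgetAdjStar U').homEquiv _ U).symm _ = _
  rw [Adjunction.homEquiv_counit]
  rfl

theorem classEquiv_natural (p : U' ⟶ U) (F : Over U' ⥤ Over U) (adj : Over.pullback p ⊣ F)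
    {Γ' Γ : C} (σ : Γ' ⟶ Γ) (g : yoneda.obj Γ ⟶ (polyFunctor p F).obj U) :
    ((classEquiv p F adj Γ') (yoneda.map σ ≫ g)).2 =
      pullback.lift
          (pullback.fst (((classEquiv p F adj Γ') (yoneda.map σ ≫ g)).1) p ≫ yoneda.map σ)
          (pullback.snd (((classEquiv p F adj Γ') (yoneda.map σ ≫ g)).1) p)
          (by simp only [Category.assoc]; rw [← show ((classEquiv p F adj Γ') (yoneda.map σ ≫ g)).1 = yoneda.map σ ≫ ((classEquiv p F adj Γ) g).1 by simp [classEquiv_fst]]; exact pullback.condition) ≫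
        ((classEquiv p F adj Γ) g).2 := by
  rw [classEquiv_snd, classEquiv_snd]
  have hcomp : (Over.homMk (yoneda.map σ ≫ g) rfl :
      Over.mk ((yoneda.map σ ≫ g) ≫ polyProj p F U) ⟶ F.obj ((Over.star U').obj U)) =
      (Over.homMk (yoneda.map σ) (by simp) :
        Over.mk ((yoneda.map σ ≫ g) ≫ polyProj p F U) ⟶ Over.mk (g ≫ polyProj p F U)) ≫
        Over.homMk g rfl :=
    Over.OverMorphism.ext rfl
  erw [hcomp, Adjunction.homEquiv_naturality_left_symm]
  rw [Over.comp_left]; refine (assoc _ _ _).trans ?_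
  congr 1

end ClassEquiv

/-- For a representable natural transformation `p : Ũ ⟶ U` of presheaves with
polynomial endofunctor `P_p` (presented by a right adjoint `F = Π_p` to pullback along `p`),
maps `yΓ ⟶ P_p(U)` correspond bijectively, naturally in `Γ`, to pairs `(A : yΓ ⟶ U,
B : yΓ ×_U Ũ ⟶ U)`, where `yΓ ×_U Ũ` is the pullback of `p` along `A`. -/
theorem classify_types_in_extended_context {U' U : Cᵒᵖ ⥤ Type u} (p : U' ⟶ U) (hp : RepNT p)
    (F : Over U' ⥤ Over U) (adj : Over.pullback p ⊣ F) :
    ∃ e : ∀ Γ : C, (yoneda.obj Γ ⟶ (polyFunctor p F).obj U) ≃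
        (Σ A : yoneda.obj Γ ⟶ U, (pullback A p ⟶ U)),
      ∀ {Γ' Γ : C} (σ : Γ' ⟶ Γ) (g : yoneda.obj Γ ⟶ (polyFunctor p F).obj U),
        ∃ h1 : ((e Γ') (yoneda.map σ ≫ g)).1 = yoneda.map σ ≫ ((e Γ) g).1,
          ((e Γ') (yoneda.map σ ≫ g)).2 =
            pullback.lift (pullback.fst (((e Γ') (yoneda.map σ ≫ g)).1) p ≫ yoneda.map σ)
              (pullback.snd (((e Γ') (yoneda.map σ ≫ g)).1) p)
              (by rw [Category.assoc, ← h1]; exact pullback.condition) ≫ ((e Γ) g).2 := by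
  refine ⟨classEquiv p F adj, fun {Γ' Γ} σ g => ⟨by simp [classEquiv_fst], ?_⟩⟩
  exact classEquiv_natural p F adj σ g

end NatModel

end
end

section
/- Let ℂ be a small category, I an index type, and for each i ∈ I let f_i : Y_i ⟶ X_i be a representable natural transformation of presheaves on ℂ. Then the induced map on coproducts ∐_{i∈I} f_i : ∐_{i∈I} Y_i ⟶ ∐_{i∈I} X_i is representable. -/
open CategoryTheory Category Limits Opposite MonoidalCategory

universe v u

noncomputable section

namespace NatModel

variable {C : Type u} [SmallCategory C]


/-- Pointwise evaluation equivalence for a coproduct of presheaves. -/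
def sigmaObjEquiv {I : Type u} (Y : I → Cᵒᵖ ⥤ Type u) (c : Cᵒᵖ) :
    (∐ Y).obj c ≃ Σ i, (Y i).obj c :=
  ((preservesColimitIso ((evaluation Cᵒᵖ (Type u)).obj c) (Discrete.functor Y)).trans
    ((HasColimit.isoOfNatIso
        (Discrete.natIso (F := Discrete.functor Y ⋙ (evaluation Cᵒᵖ (Type u)).obj c)
          (G := Discrete.functor (fun i => (Y i).obj c)) (fun i => Iso.refl _))).trans
      (Types.coproductIso (fun i => (Y i).obj c)))).toEquiv

lemma sigmaObjEquiv_ι {I : Type u} (Y : I → Cᵒᵖ ⥤ Type u) (c : Cᵒᵖ) (i : I)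
    (t : (Y i).obj c) :
    sigmaObjEquiv Y c ((Sigma.ι Y i).app c t) = ⟨i, t⟩ := by
  have h1 : (preservesColimitIso ((evaluation Cᵒᵖ (Type u)).obj c)
      (Discrete.functor Y)).hom ((Sigma.ι Y i).app c t) =
      colimit.ι (Discrete.functor Y ⋙ (evaluation Cᵒᵖ (Type u)).obj c) ⟨i⟩ t :=
    ConcreteCategory.congr_hom (ι_preservesColimitIso_hom ((evaluation Cᵒᵖ (Type u)).obj c)
      (Discrete.functor Y) ⟨i⟩) t
  have h2 : ∀ a, (HasColimit.isoOfNatIso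
      (Discrete.natIso (F := Discrete.functor Y ⋙ (evaluation Cᵒᵖ (Type u)).obj c)
        (G := Discrete.functor (fun i => (Y i).obj c)) (fun i => Iso.refl _))).hom
      (colimit.ι (Discrete.functor Y ⋙ (evaluation Cᵒᵖ (Type u)).obj c) ⟨i⟩ a) =
      Sigma.ι (fun i => (Y i).obj c) i a := fun a =>
    ConcreteCategory.congr_hom (HasColimit.isoOfNatIso_ι_hom
      (Discrete.natIso (F := Discrete.functor Y ⋙ (evaluation Cᵒᵖ (Type u)).obj c)
        (G := Discrete.functor (fun i => (Y i).obj c)) (fun i => Iso.refl _)) ⟨i⟩) a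
  have h3 : ∀ a, (Types.coproductIso (fun i => (Y i).obj c)).hom
      (Sigma.ι (fun i => (Y i).obj c) i a) = ⟨i, a⟩ := fun a =>
    ConcreteCategory.congr_hom (Types.coproductIso_ι_comp_hom (fun i => (Y i).obj c) i) a
  show (Types.coproductIso (fun i => (Y i).obj c)).hom
    ((HasColimit.isoOfNatIso
      (Discrete.natIso (F := Discrete.functor Y ⋙ (evaluation Cᵒᵖ (Type u)).obj c)
        (G := Discrete.functor (fun i => (Y i).obj c)) (fun i => Iso.refl _))).hom
      ((preservesColimitIso ((evaluation Cᵒᵖ (Type u)).obj c)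
        (Discrete.functor Y)).hom ((Sigma.ι Y i).app c t))) = ⟨i, t⟩
  rw [h1, h2, h3]

lemma sigmaObjEquiv_decomp {I : Type u} (Y : I → Cᵒᵖ ⥤ Type u) (c : Cᵒᵖ)
    (u : (∐ Y).obj c) :
    u = (Sigma.ι Y (sigmaObjEquiv Y c u).1).app c (sigmaObjEquiv Y c u).2 := by
  apply (sigmaObjEquiv Y c).injective
  rw [sigmaObjEquiv_ι]

lemma isPullback_of_app {P Z Y X : Cᵒᵖ ⥤ Type u} {fst : P ⟶ Y} {snd : P ⟶ X}
    {g : Y ⟶ Z} {h : X ⟶ Z} (w : fst ≫ g = snd ≫ h)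
    (H : ∀ c : Cᵒᵖ, IsLimit (PullbackCone.mk (fst.app c) (snd.app c)
      (by rw [← NatTrans.comp_app, ← NatTrans.comp_app, w]) :
        PullbackCone (g.app c) (h.app c))) :
    IsPullback fst snd g h := by
  refine IsPullback.of_isLimit (c := PullbackCone.mk fst snd w) ?_
  exact evaluationJointlyReflectsLimits _ (fun k =>
    (isLimitMapConePullbackConeEquiv ((evaluation Cᵒᵖ (Type u)).obj k) w).symm (H k))

lemma isPullback_ι_map {I : Type u} (Y X : I → Cᵒᵖ ⥤ Type u)
    (f : ∀ i, Y i ⟶ X i) (i : I) :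
    IsPullback (Sigma.ι Y i) (f i) (Limits.Sigma.map f) (Sigma.ι X i) := by
  apply isPullback_of_app
    (show Sigma.ι Y i ≫ Limits.Sigma.map f = f i ≫ Sigma.ι X i by simp)
  intro c
  refine (PullbackCone.isLimitEquivBijective _).symm ⟨?_, ?_⟩
  · intro t t' ht
    have h1 := congr_arg (fun q => (sigmaObjEquiv Y c) q.1.1) ht
    dsimp at h1
    change sigmaObjEquiv Y c ((Sigma.ι Y i).app c t) =
      sigmaObjEquiv Y c ((Sigma.ι Y i).app c t') at h1
    rw [sigmaObjEquiv_ι Y c i t, sigmaObjEquiv_ι Y c i t'] at h1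
    exact eq_of_heq (Sigma.mk.inj_iff.1 h1).2
  · rintro ⟨⟨u, x⟩, hw⟩
    obtain ⟨j, y, hu⟩ : ∃ j y, u = (Sigma.ι Y j).app c y :=
      ⟨_, _, sigmaObjEquiv_decomp Y c u⟩
    have hw' : (Limits.Sigma.map f).app c u = (Sigma.ι X i).app c x := hw
    have hmap : (Limits.Sigma.map f).app c u = (Sigma.ι X j).app c ((f j).app c y) := by
      rw [hu]
      exact ConcreteCategory.congr_hom (congr_app
        (show Sigma.ι Y j ≫ Limits.Sigma.map f = f j ≫ Sigma.ι X j by simp) c) y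
    have h2 : (⟨j, (f j).app c y⟩ : Σ k, (X k).obj c) = ⟨i, x⟩ := by
      rw [← sigmaObjEquiv_ι (I := I) X c j, ← sigmaObjEquiv_ι (I := I) X c i, ← hmap, hw']
    obtain ⟨h4, h3⟩ := Sigma.mk.inj_iff.1 h2
    subst h4
    refine ⟨y, ?_⟩
    apply Subtype.ext
    apply Prod.ext
    · exact hu.symm
    · exact eq_of_heq h3

/-- A coproduct of representable natural transformations is representable. -/
theorem repNT_coproduct (I : Type u) (Y X : I → Cᵒᵖ ⥤ Type u)
    (f : ∀ i, Y i ⟶ X i) (hf : ∀ i, RepNT (f i)) :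
    RepNT (C := C) (Limits.Sigma.map f) := by
  intro c x
  obtain ⟨j, x₀, hx⟩ : ∃ (j : I) (x₀ : (X j).obj (op c)),
      yonedaEquiv x = (Sigma.ι X j).app (op c) x₀ :=
    ⟨_, _, sigmaObjEquiv_decomp X (op c) (yonedaEquiv x)⟩
  set x' : yoneda.obj c ⟶ X j := yonedaEquiv.symm x₀ with hx'
  have hfac : x' ≫ Sigma.ι X j = x := by
    apply yonedaEquiv.injective
    rw [yonedaEquiv_comp, hx, hx', Equiv.apply_symm_apply]
  obtain ⟨d, p, η, hp⟩ := hf j c x'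
  refine ⟨d, p, η ≫ Sigma.ι Y j, ?_⟩
  have := hp.paste_horiz (isPullback_ι_map Y X f j)
  rwa [hfac] at this

end NatModel

end
end

section
/- Let ℂ be a small category and f : A ⟶ B a natural transformation of presheaves on ℂ. Then f is representable if and only if the induced functor ∫f : ∫A → ∫B between the categories of elements has a right adjoint. -/
open CategoryTheory Category Limits Opposite MonoidalCategory

universe v u

noncomputable section

namespace NatModel

variable {C : Type u} [SmallCategory C]


section Aux
variable {A B : Cᵒᵖ ⥤ Type u} (f : A ⟶ B)

/-- Unique lifting property against representables. -/
def UL {c d : C} (p : d ⟶ c) (η : yoneda.obj d ⟶ A) (x : yoneda.obj c ⟶ B) : Prop :=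
  ∀ (e : Cᵒᵖ) (a : A.obj e) (u : e.unop ⟶ c), f.app e a = x.app e u →
    ∃! v : e.unop ⟶ d, v ≫ p = u ∧ η.app e v = a

lemma ul_of_isPullback {c d : C} {p : d ⟶ c} {η : yoneda.obj d ⟶ A} {x : yoneda.obj c ⟶ B}
    (h : IsPullback η (yoneda.map p) f x) : UL f p η x := by
  intro e a u hau
  have cond : yonedaEquiv.symm a ≫ f = yoneda.map u ≫ x := by
    apply yonedaEquiv.injective
    rw [yonedaEquiv_comp, yonedaEquiv_comp, Equiv.apply_symm_apply, yonedaEquiv_yoneda_map]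
    exact hau
  let l : yoneda.obj e.unop ⟶ yoneda.obj d := h.lift (yonedaEquiv.symm a) (yoneda.map u) cond
  refine ⟨yonedaEquiv l, ⟨?_, ?_⟩, ?_⟩
  · have := h.lift_snd (yonedaEquiv.symm a) (yoneda.map u) cond
    have := congrArg yonedaEquiv this
    rwa [yonedaEquiv_comp, yonedaEquiv_yoneda_map, yoneda_map_app] at this
  · have := h.lift_fst (yonedaEquiv.symm a) (yoneda.map u) cond
    have := congrArg yonedaEquiv this
    rwa [yonedaEquiv_comp, Equiv.apply_symm_apply] at this
  · intro v' ⟨hv1, hv2⟩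
    have hl : yonedaEquiv.symm v' = l := by
      apply h.hom_ext
      · rw [h.lift_fst]
        apply yonedaEquiv.injective
        rw [yonedaEquiv_comp, Equiv.apply_symm_apply, Equiv.apply_symm_apply]
        exact hv2
      · rw [h.lift_snd]
        apply yonedaEquiv.injective
        rw [yonedaEquiv_comp, Equiv.apply_symm_apply, yonedaEquiv_yoneda_map, yoneda_map_app]
        exact hv1
    have := congrArg yonedaEquiv hl
    rwa [Equiv.apply_symm_apply] at this

lemma isPullback_of_ul {c d : C} {p : d ⟶ c} {η : yoneda.obj d ⟶ A} {x : yoneda.obj c ⟶ B}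
    (comm : η ≫ f = yoneda.map p ≫ x) (h : UL f p η x) :
    IsPullback η (yoneda.map p) f x := by
  -- the chosen lift of an element
  have key : ∀ (s : PullbackCone f x) (e : Cᵒᵖ) (t : s.pt.obj e),
      f.app e (s.fst.app e t) = x.app e (s.snd.app e t) := by
    intro s e t
    exact ConcreteCategory.congr_hom (NatTrans.congr_app s.condition e) t
  let L : ∀ (s : PullbackCone f x) (e : Cᵒᵖ), s.pt.obj e → (e.unop ⟶ d) :=
    fun s e t => (h e (s.fst.app e t) (s.snd.app e t) (key s e t)).exists.choose
  have hL : ∀ (s : PullbackCone f x) (e : Cᵒᵖ) (t : s.pt.obj e),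
      (L s e t ≫ p = s.snd.app e t ∧ η.app e (L s e t) = s.fst.app e t) :=
    fun s e t => (h e (s.fst.app e t) (s.snd.app e t) (key s e t)).exists.choose_spec
  have hLu : ∀ (s : PullbackCone f x) (e : Cᵒᵖ) (t : s.pt.obj e) (v : e.unop ⟶ d),
      v ≫ p = s.snd.app e t → η.app e v = s.fst.app e t → v = L s e t := by
    intro s e t v h1 h2
    exact ((h e (s.fst.app e t) (s.snd.app e t) (key s e t)).unique ⟨h1, h2⟩
      ⟨(hL s e t).1, (hL s e t).2⟩)
  refine IsPullback.of_isLimit (PullbackCone.IsLimit.mk comm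
    (fun s => { app := fun e => TypeCat.ofHom (fun t => L s e t), naturality := ?_ }) ?_ ?_ ?_)
  · intro e e' g
    ext t
    show L s e' (s.pt.map g t) = g.unop ≫ L s e t
    refine (hLu s e' (s.pt.map g t) (g.unop ≫ L s e t) ?_ ?_).symm
    · rw [assoc, (hL s e t).1]
      exact (ConcreteCategory.congr_hom (s.snd.naturality g) t).symm
    · have hn : η.app e' ((yoneda.obj d).map g (L s e t)) = A.map g (η.app e (L s e t)) :=
        ConcreteCategory.congr_hom (η.naturality g) (L s e t)
      have : (yoneda.obj d).map g (L s e t) = g.unop ≫ L s e t := rfl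
      rw [this] at hn
      rw [hn, (hL s e t).2]
      exact (ConcreteCategory.congr_hom (s.fst.naturality g) t).symm
  · intro s
    ext e t
    exact (hL s e t).2
  · intro s
    ext e t
    exact (hL s e t).1
  · intro s m hm1 hm2
    ext e t
    exact hLu s e t (m.app e t) (ConcreteCategory.congr_hom (NatTrans.congr_app hm2 e) t)
      (ConcreteCategory.congr_hom (NatTrans.congr_app hm1 e) t)

end Aux

section Main
variable {A B : Cᵒᵖ ⥤ Type u} (f : A ⟶ B)

open CategoryOfElements

lemma map_yonedaEquiv' {F : Cᵒᵖ ⥤ Type u} {d : C} (η : yoneda.obj d ⟶ F) (e : Cᵒᵖ)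
    (v : e.unop ⟶ d) : F.map v.op (yonedaEquiv η) = η.app e v := by
  rw [yonedaEquiv_naturality, yonedaEquiv_comp, yonedaEquiv_yoneda_map]

lemma forward (hf : RepNT f) : (CategoryOfElements.map f).op.IsLeftAdjoint := by
  rw [isLeftAdjoint_iff_hasTerminal_costructuredArrow]
  intro Z
  obtain ⟨d, p, η, hpb⟩ := hf Z.unop.1.unop (yonedaEquiv.symm Z.unop.2)
  have comm := hpb.w
  have hul := ul_of_isPullback f hpb
  have hp : B.map p.op Z.unop.2 = f.app (op d) (yonedaEquiv η) := by
    have h1 := congrArg yonedaEquiv comm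
    rw [yonedaEquiv_comp, yonedaEquiv_comp, yonedaEquiv_yoneda_map] at h1
    exact h1.symm
  let W₀ : A.Elements := ⟨op d, yonedaEquiv η⟩
  let tHom : Z.unop ⟶ (CategoryOfElements.map f).obj W₀ := ⟨p.op, hp⟩
  let T : CostructuredArrow (CategoryOfElements.map f).op Z := CostructuredArrow.mk tHom.op
  -- data extracted from an arbitrary object Y
  have hyp : ∀ (Y : CostructuredArrow (CategoryOfElements.map f).op Z),
      f.app Y.left.unop.1 Y.left.unop.2 =
        (yonedaEquiv.symm Z.unop.2).app Y.left.unop.1 Y.hom.unop.val.unop := by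
    intro Y
    exact Y.hom.unop.property.symm
  let v : ∀ (Y : CostructuredArrow (CategoryOfElements.map f).op Z),
      Y.left.unop.1.unop ⟶ d := fun Y =>
    (hul Y.left.unop.1 Y.left.unop.2 Y.hom.unop.val.unop (hyp Y)).exists.choose
  have hv : ∀ Y, v Y ≫ p = Y.hom.unop.val.unop ∧
      η.app Y.left.unop.1 (v Y) = Y.left.unop.2 := fun Y =>
    (hul Y.left.unop.1 Y.left.unop.2 Y.hom.unop.val.unop (hyp Y)).exists.choose_spec
  have hvu : ∀ Y (w : Y.left.unop.1.unop ⟶ d), w ≫ p = Y.hom.unop.val.unop →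
      η.app Y.left.unop.1 w = Y.left.unop.2 → w = v Y := fun Y w h1 h2 =>
    (hul Y.left.unop.1 Y.left.unop.2 Y.hom.unop.val.unop (hyp Y)).unique ⟨h1, h2⟩
      ⟨(hv Y).1, (hv Y).2⟩
  have hk : ∀ Y, A.map (v Y).op (yonedaEquiv η) = Y.left.unop.2 := by
    intro Y
    rw [map_yonedaEquiv']
    exact (hv Y).2
  let k : ∀ Y : CostructuredArrow (CategoryOfElements.map f).op Z, W₀ ⟶ Y.left.unop :=
    fun Y => ⟨(v Y).op, hk Y⟩
  refine IsTerminal.hasTerminal (X := T) (IsTerminal.ofUniqueHom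
    (fun Y => CostructuredArrow.homMk (k Y).op ?_) ?_)
  · apply Quiver.Hom.unop_inj
    apply Subtype.ext
    show p.op ≫ (v Y).op = Y.hom.unop.val
    rw [← op_comp, (hv Y).1]
    rfl
  · intro Y m
    apply CostructuredArrow.hom_ext
    show m.left = (k Y).op
    have hw : p.op ≫ m.left.unop.val = Y.hom.unop.val :=
      congrArg (fun (q : _ ⟶ Z) => q.unop.val) (CostructuredArrow.w m)
    have h2 : η.app Y.left.unop.1 m.left.unop.val.unop = Y.left.unop.2 := by
      rw [← map_yonedaEquiv']
      exact m.left.unop.property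
    have h1 : m.left.unop.val.unop ≫ p = Y.hom.unop.val.unop :=
      congrArg Quiver.Hom.unop hw
    have := hvu Y m.left.unop.val.unop h1 h2
    have hval : m.left.unop.val = (v Y).op := congrArg Quiver.Hom.op this
    apply Quiver.Hom.unop_inj
    exact Subtype.ext hval

lemma backward (hl : (CategoryOfElements.map f).op.IsLeftAdjoint) : RepNT f := by
  rw [isLeftAdjoint_iff_hasTerminal_costructuredArrow] at hl
  intro c x
  set b := yonedaEquiv x with hb
  let Z : B.Elementsᵒᵖ := op ⟨op c, b⟩
  haveI := hl Z
  let T := ⊤_ (CostructuredArrow (CategoryOfElements.map f).op Z)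
  let d : C := T.left.unop.1.unop
  let a₀ : A.obj T.left.unop.1 := T.left.unop.2
  let q : op c ⟶ T.left.unop.1 := T.hom.unop.val
  have hq : B.map q b = f.app T.left.unop.1 a₀ := T.hom.unop.property
  let p : d ⟶ c := q.unop
  let η : yoneda.obj d ⟶ A := yonedaEquiv.symm a₀
  have comm : η ≫ f = yoneda.map p ≫ x := by
    apply yonedaEquiv.injective
    rw [yonedaEquiv_comp, yonedaEquiv_comp, Equiv.apply_symm_apply, yonedaEquiv_yoneda_map]
    rw [← map_yonedaEquiv' x (op d) p]
    exact hq.symm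
  refine ⟨d, p, η, isPullback_of_ul f comm ?_⟩
  intro e a u hau
  have hg : B.map u.op b = f.app e a := by
    rw [map_yonedaEquiv' x e u]
    exact hau.symm
  let g : Z.unop ⟶ (CategoryOfElements.map f).obj ⟨e, a⟩ := ⟨u.op, hg⟩
  let Y : CostructuredArrow (CategoryOfElements.map f).op Z := CostructuredArrow.mk g.op
  let m : Y ⟶ T := terminal.from Y
  refine ⟨m.left.unop.val.unop, ⟨?_, ?_⟩, ?_⟩
  · have hw : q ≫ m.left.unop.val = u.op :=
      congrArg (fun (r : _ ⟶ Z) => r.unop.val) (CostructuredArrow.w m)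
    exact congrArg Quiver.Hom.unop hw
  · exact m.left.unop.property
  · intro v' ⟨h1', h2'⟩
    have cond : A.map v'.op a₀ = a := by
      rw [← h2']; rfl
    let k' : T.left.unop ⟶ (⟨e, a⟩ : A.Elements) := ⟨v'.op, cond⟩
    have hk' : (CategoryOfElements.map f).op.map k'.op ≫ T.hom = Y.hom := by
      apply Quiver.Hom.unop_inj
      apply Subtype.ext
      show q ≫ v'.op = u.op
      rw [← h1']
      rfl
    let m' : Y ⟶ T := CostructuredArrow.homMk k'.op hk'
    have : m' = m := terminal.hom_ext m' m
    have hval : k'.op = m.left := congrArg CommaMorphism.left this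
    have : v'.op = m.left.unop.val := congrArg (fun r => r.unop.val) hval
    exact congrArg Quiver.Hom.unop this


/-- A natural transformation of presheaves `f : A ⟶ B` is representable if
and only if the induced functor `∫f : ∫A ⥤ ∫B` on categories of elements has a right adjoint.
Here `∫A` (with objects `(C, x ∈ A(C))` and morphisms `u : C ⟶ C'` with `A(u)(x') = x`) is the
opposite of Mathlib's `A.Elements`, and `∫f` is the opposite of `CategoryOfElements.map f`. -/
theorem repNT_iff_elements_isLeftAdjoint {A B : Cᵒᵖ ⥤ Type u} (f : A ⟶ B) :
    RepNT f ↔ (CategoryOfElements.map f).op.IsLeftAdjoint := by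
  exact ⟨forward f, backward f⟩

end Main

end NatModel

end
end

section
/- Let 𝒟 be a stable class of morphisms in a small category ℂ, with associated natural transformation π : 𝒟₁ ⟶ 𝒟₀, and let d : A₁ → A₀ be a morphism in 𝒟. Then the square of presheaves whose top map yA₁ ⟶ 𝒟₁ sends s : C → A₁ to (s, d), whose bottom map yA₀ ⟶ 𝒟₀ sends t : C → A₀ to (t, d), whose left map is y(d), and whose right map is π, commutes and is a pullback. -/
open CategoryTheory Category Limits Opposite MonoidalCategory

universe v u

noncomputable section

namespace NatModel

variable {C : Type u} [SmallCategory C]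


/-- A class of morphisms is **stable** if in every pullback square whose right-hand vertical
morphism lies in the class, the left-hand vertical morphism also lies in the class. -/
def StableClass {C : Type u} [Category.{u} C] (D : MorphismProperty C) : Prop :=
  ∀ ⦃P X Y Z : C⦄ (fst : P ⟶ X) (snd : P ⟶ Y) (f : X ⟶ Z) (g : Y ⟶ Z),
    IsPullback fst snd f g → D f → D snd

/-- An element of the presheaf `𝒟₁` at `c`: a pair `(a, d)` with `d ∈ 𝒟` and
`a : c ⟶ dom d`. -/
structure DOneElt (D : MorphismProperty C) (c : C) : Type u where
  {mid : C}
  {tgt : C}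
  a : c ⟶ mid
  d : mid ⟶ tgt
  hd : D d

/-- An element of the presheaf `𝒟₀` at `c`: a pair `(b, d)` with `d ∈ 𝒟` and
`b : c ⟶ cod d`. -/
structure DZeroElt (D : MorphismProperty C) (c : C) : Type u where
  {src : C}
  {tgt : C}
  b : c ⟶ tgt
  d : src ⟶ tgt
  hd : D d

/-- The presheaf `𝒟₁` of "terms" of a class of maps `𝒟`; the action is by precomposition
in the first component. -/
@[simps]
def DOne (D : MorphismProperty C) : Cᵒᵖ ⥤ Type u where
  obj c := DOneElt D c.unop
  map s := TypeCat.ofHom fun e => ⟨s.unop ≫ e.a, e.d, e.hd⟩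
  map_id := by intro c; ext e; cases e; simp
  map_comp := by intro _ _ _ s t; ext e; cases e; simp

/-- The presheaf `𝒟₀` of "types" of a class of maps `𝒟`; the action is by precomposition
in the first component. -/
@[simps]
def DZero (D : MorphismProperty C) : Cᵒᵖ ⥤ Type u where
  obj c := DZeroElt D c.unop
  map s := TypeCat.ofHom fun e => ⟨s.unop ≫ e.b, e.d, e.hd⟩
  map_id := by intro c; ext e; cases e; simp
  map_comp := by intro _ _ _ s t; ext e; cases e; simp

/-- The natural transformation `π : 𝒟₁ ⟶ 𝒟₀`, given by `π (a, d) = (d ∘ a, d)`. -/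
@[simps]
def piD (D : MorphismProperty C) : DOne D ⟶ DZero D where
  app c := TypeCat.ofHom fun e => ⟨e.a ≫ e.d, e.d, e.hd⟩
  naturality := by
    intro c c' s; ext e; cases e
    exact congrArg (fun x => (DZeroElt.mk x _ _ : DZeroElt D _)) (Category.assoc _ _ _)


/-- The map `y A₁ ⟶ 𝒟₁` sending `s : c ⟶ A₁` to `(s, d)`. -/
@[simps]
def yonedaToDOne (D : MorphismProperty C) {A₁ A₀ : C} (d : A₁ ⟶ A₀) (hd : D d) :
    yoneda.obj A₁ ⟶ DOne D where
  app c := TypeCat.ofHom fun s => ⟨s, d, hd⟩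
  naturality := by intro c c' u; ext s; rfl

/-- The map `y A₀ ⟶ 𝒟₀` sending `t : c ⟶ A₀` to `(t, d)`. -/
@[simps]
def yonedaToDZero (D : MorphismProperty C) {A₁ A₀ : C} (d : A₁ ⟶ A₀) (hd : D d) :
    yoneda.obj A₀ ⟶ DZero D where
  app c := TypeCat.ofHom fun t => ⟨t, d, hd⟩
  naturality := by intro c c' u; ext t; rfl

lemma pi_app_eq {D : MorphismProperty C} {c : Cᵒᵖ} {A₁ A₀ : C} {d : A₁ ⟶ A₀} {hd : D d}
    {t : c.unop ⟶ A₀} (e : DOneElt D c.unop)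
    (h : ((piD D).app c).hom e = DZeroElt.mk t d hd) :
    ∃ a : c.unop ⟶ A₁, e = DOneElt.mk a d hd ∧ a ≫ d = t := by
  obtain ⟨a, d', hd'⟩ := e
  change DZeroElt.mk (a ≫ d') d' hd' = DZeroElt.mk t d hd at h
  rw [DZeroElt.mk.injEq] at h
  obtain ⟨rfl, rfl, h1, h2⟩ := h
  rw [heq_iff_eq] at h1 h2
  subst h2
  exact ⟨a, rfl, h1⟩

lemma cond_eq {D : MorphismProperty C} {A₁ A₀ : C} {d : A₁ ⟶ A₀} {hd : D d}
    (s : PullbackCone (piD D) (yonedaToDZero D d hd)) (c : Cᵒᵖ) (w : s.pt.obj c) :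
    ((piD D).app c).hom (s.fst.app c w) = DZeroElt.mk (s.snd.app c w) d hd :=
  ConcreteCategory.congr_hom (congr_app s.condition c) w

/-- For any `d : A₁ ⟶ A₀` in a stable class `𝒟`, the square with top
`s ↦ (s, d)`, bottom `t ↦ (t, d)`, left `y d` and right `π : 𝒟₁ ⟶ 𝒟₀` commutes and is a
pullback of presheaves. -/
theorem display_isPullback (D : MorphismProperty C) (hD : StableClass D)
    {A₁ A₀ : C} (d : A₁ ⟶ A₀) (hd : D d) :
    IsPullback (yonedaToDOne D d hd) (yoneda.map d) (piD D) (yonedaToDZero D d hd) := by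
  have comm : yonedaToDOne D d hd ≫ piD D = yoneda.map d ≫ yonedaToDZero D d hd := rfl
  refine IsPullback.of_isLimit' ⟨comm⟩ (PullbackCone.IsLimit.mk _ ?_ ?_ ?_ ?_)
  · -- lift
    intro s
    exact
      { app := fun c => TypeCat.ofHom fun w =>
          (pi_app_eq (s.fst.app c w) (cond_eq s c w)).choose
        naturality := by
          intro c c' u
          ext w
          have h1 := (pi_app_eq (s.fst.app c w)
            (cond_eq s c w)).choose_spec.1
          have h2 := (pi_app_eq (s.fst.app c' (s.pt.map u w))
            (cond_eq s c' (s.pt.map u w))).choose_spec.1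
          have key : (DOne D).map u (s.fst.app c w) = s.fst.app c' (s.pt.map u w) :=
            (ConcreteCategory.congr_hom (s.fst.naturality u) w).symm
          rw [h1, h2] at key
          dsimp only [DOne] at key
          rw [DOneElt.mk.injEq] at key
          have := heq_iff_eq.mp key.2.2.1
          dsimp
          exact this.symm }
  · -- fac left
    intro s
    ext c w
    exact (pi_app_eq (s.fst.app c w)
      (cond_eq s c w)).choose_spec.1.symm
  · -- fac right
    intro s
    ext c w
    exact (pi_app_eq (s.fst.app c w)
      (cond_eq s c w)).choose_spec.2
  · -- uniqueness
    intro s m hm1 hm2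
    ext c w
    have h1 := (pi_app_eq (s.fst.app c w)
      (cond_eq s c w)).choose_spec.1
    have hm := ConcreteCategory.congr_hom (congr_app hm1 c) w
    change (DOneElt.mk (m.app c w) d hd : DOneElt D c.unop) = _ at hm
    rw [h1] at hm
    rw [DOneElt.mk.injEq] at hm
    exact heq_iff_eq.mp hm.2.2.1

end NatModel

end
end
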